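/- Let P ⊂ ℝ³ be a convex polytope with vertices p₁,…,p_m and angle defects δ₁,…,δ_m (δᵢ = 2π minus the total angle at vertex pᵢ, so δᵢ > 0 and Σδᵢ = 4π). Then for every i, ‖ Σ_{j≠i} δⱼ (pⱼ−pᵢ)/‖pⱼ−pᵢ‖ ‖ > δᵢ. -/

import Mathlib

open Real

noncomputable section SD

lemma arccos_le_arccos' {a b : ℝ} (hab : a ≤ b) :
    Real.arccos b ≤ Real.arccos a := by
  unfold Real.arccos
  have : Real.arcsin a ≤ Real.arcsin b := Real.monotone_arcsin hab
  linarith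

variable {E : Type*} [NormedAddCommGroup E] [InnerProductSpace ℝ E]

def sd (x y : E) : ℝ := Real.arccos (inner ℝ x y : ℝ)

lemma inner_le_one' {x y : E} (hx : ‖x‖ = 1) (hy : ‖y‖ = 1) :
    (inner ℝ x y : ℝ) ≤ 1 := by
  have := real_inner_le_norm x y
  rw [hx, hy] at this; linarith

lemma neg_one_le_inner {x y : E} (hx : ‖x‖ = 1) (hy : ‖y‖ = 1) :
    (-1 : ℝ) ≤ (inner ℝ x y : ℝ) := by
  have h := abs_real_inner_le_norm x y
  rw [hx, hy] at h
  have := (abs_le.mp (by linarith : |(inner ℝ x y : ℝ)| ≤ 1)).1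
  linarith

lemma sd_nonneg (x y : E) : 0 ≤ sd x y := Real.arccos_nonneg _

lemma sd_le_pi (x y : E) : sd x y ≤ π := Real.arccos_le_pi _

lemma cos_sd {x y : E} (hx : ‖x‖ = 1) (hy : ‖y‖ = 1) :
    Real.cos (sd x y) = (inner ℝ x y : ℝ) :=
  Real.cos_arccos (neg_one_le_inner hx hy) (inner_le_one' hx hy)

lemma sd_comm (x y : E) : sd x y = sd y x := by
  unfold sd; rw [real_inner_comm]

lemma sd_self {x : E} (hx : ‖x‖ = 1) : sd x x = 0 := by
  unfold sd
  rw [real_inner_self_eq_norm_sq, hx]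
  norm_num

lemma norm_sub_smul_sq {x y : E} (hx : ‖x‖ = 1) (hy : ‖y‖ = 1) :
    ‖x - (inner ℝ x y : ℝ) • y‖ ^ 2 = 1 - (inner ℝ x y : ℝ) ^ 2 := by
  rw [norm_sub_sq_real, real_inner_smul_right, norm_smul, hx, hy,
    Real.norm_eq_abs, real_inner_comm y x]
  rw [mul_one, sq_abs]; ring

lemma sin_sd {x y : E} (hx : ‖x‖ = 1) (hy : ‖y‖ = 1) :
    Real.sin (sd x y) = ‖x - (inner ℝ x y : ℝ) • y‖ := by
  rw [show sd x y = Real.arccos (inner ℝ x y : ℝ) from rfl, Real.sin_arccos]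
  rw [show (1 : ℝ) - (inner ℝ x y : ℝ) ^ 2 = ‖x - (inner ℝ x y : ℝ) • y‖ ^ 2 from
    (norm_sub_smul_sq hx hy).symm]
  exact Real.sqrt_sq (norm_nonneg _)

/-- Triangle inequality for spherical distance on unit vectors. -/
lemma sd_triangle {x y z : E} (hx : ‖x‖ = 1) (hy : ‖y‖ = 1) (hz : ‖z‖ = 1) :
    sd x z ≤ sd x y + sd y z := by
  rcases le_or_gt π (sd x y + sd y z) with h | h
  · exact (sd_le_pi x z).trans h
  · have key : Real.cos (sd x y + sd y z) ≤ (inner ℝ x z : ℝ) := by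
      rw [Real.cos_add, cos_sd hx hy, sd_comm y z, cos_sd hz hy, sin_sd hx hy,
        sin_sd hz hy]
      set a : ℝ := inner ℝ x y with ha
      set b : ℝ := inner ℝ z y with hb
      have hcs := abs_real_inner_le_norm (x - a • y) (z - b • y)
      have hexp : (inner ℝ (x - a • y) (z - b • y) : ℝ) = (inner ℝ x z : ℝ) - a * b := by
        rw [inner_sub_left, inner_sub_right, inner_sub_right]
        have hyx : (inner ℝ y x : ℝ) = a := by rw [ha]; exact real_inner_comm x y
        have hyz : (inner ℝ y z : ℝ) = b := by rw [hb]; exact real_inner_comm z y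
        simp only [real_inner_smul_left, real_inner_smul_right,
          real_inner_self_eq_norm_sq, hy, hyx, hyz]
        ring
      rw [hexp] at hcs
      have := (abs_le.mp hcs).1
      linarith
    have h1 : sd x z = Real.arccos (inner ℝ x z : ℝ) := rfl
    rw [h1]
    calc Real.arccos (inner ℝ x z : ℝ)
        ≤ Real.arccos (Real.cos (sd x y + sd y z)) :=
          arccos_le_arccos' key
      _ = sd x y + sd y z :=
          Real.arccos_cos (add_nonneg (sd_nonneg _ _) (sd_nonneg _ _)) h.le


/-- reflection through the line spanned by a unit vector `e` preserves inner products -/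
lemma refl_inner {e : E} (he : ‖e‖ = 1) (u v : E) :
    (inner ℝ ((2 * (inner ℝ u e : ℝ)) • e - u) ((2 * (inner ℝ v e : ℝ)) • e - v) : ℝ)
      = (inner ℝ u v : ℝ) := by
  rw [inner_sub_left, inner_sub_right, inner_sub_right]
  simp only [real_inner_smul_left, real_inner_smul_right,
    real_inner_self_eq_norm_sq, he]
  have h2 : (inner ℝ e v : ℝ) = (inner ℝ v e : ℝ) := real_inner_comm v e
  rw [h2]
  ring

lemma refl_norm {e x : E} (he : ‖e‖ = 1) (hx : ‖x‖ = 1) :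
    ‖(2 * (inner ℝ x e : ℝ)) • e - x‖ = 1 := by
  have h := refl_inner he x x
  rw [real_inner_self_eq_norm_sq, real_inner_self_eq_norm_sq, hx] at h
  nlinarith [norm_nonneg ((2 * (inner ℝ x e : ℝ)) • e - x)]

lemma refl_inner_self {e x : E} (he : ‖e‖ = 1) (hx : ‖x‖ = 1) :
    (inner ℝ x ((2 * (inner ℝ x e : ℝ)) • e - x) : ℝ) = 2 * (inner ℝ x e : ℝ)^2 - 1 := by
  rw [inner_sub_right, real_inner_smul_right, real_inner_self_eq_norm_sq, hx]
  ring

/-- dichotomy from the reflection bound -/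
lemma sd_dichotomy {e x : E} (he : ‖e‖ = 1) (hx : ‖x‖ = 1) {C : ℝ}
    (hC : C < π) (h : sd x ((2 * (inner ℝ x e : ℝ)) • e - x) ≤ C) :
    sd x e ≤ C / 2 ∨ π - C / 2 ≤ sd x e := by
  have hR : ‖(2 * (inner ℝ x e : ℝ)) • e - x‖ = 1 := refl_norm he hx
  set θ := sd x e with hθ
  have hθ0 : 0 ≤ θ := sd_nonneg _ _
  have hθπ : θ ≤ π := sd_le_pi _ _
  have hcos : Real.cos θ = (inner ℝ x e : ℝ) := cos_sd hx he
  have hkey : sd x ((2 * (inner ℝ x e : ℝ)) • e - x) = Real.arccos (Real.cos (2 * θ)) := by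
    show Real.arccos _ = _
    rw [refl_inner_self he hx, Real.cos_two_mul, hcos]
  rcases le_or_gt (2 * θ) π with h2 | h2
  · left
    have : sd x ((2 * (inner ℝ x e : ℝ)) • e - x) = 2 * θ := by
      rw [hkey, Real.arccos_cos (by linarith) h2]
    linarith [this ▸ h]
  · right
    have : sd x ((2 * (inner ℝ x e : ℝ)) • e - x) = 2 * π - 2 * θ := by
      rw [hkey, show Real.cos (2 * θ) = Real.cos (2 * π - 2 * θ) from
        (Real.cos_two_pi_sub _).symm, Real.arccos_cos (by linarith) (by linarith)]
    rw [this] at h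
    linarith


/-- spherical midpoint of two unit vectors -/
lemma exists_midpoint {x y : E} (hx : ‖x‖ = 1) (hy : ‖y‖ = 1)
    (hperp : ∃ v : E, ‖v‖ = 1 ∧ (inner ℝ x v : ℝ) = 0) :
    ∃ m : E, ‖m‖ = 1 ∧ sd x m = sd x y / 2 ∧ sd m y = sd x y / 2 ∧
      (2 * (inner ℝ x m : ℝ)) • m - x = y := by
  have hc1 : -1 ≤ (inner ℝ x y : ℝ) := neg_one_le_inner hx hy
  rcases eq_or_lt_of_le hc1 with hcm | hcm
  · -- antipodal case : y = -x
    have h0 : ‖x + y‖ ^ 2 = 0 := by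
      rw [norm_add_sq_real, hx, hy, ← hcm]; ring
    have hxy : y = -x := by
      refine eq_neg_of_add_eq_zero_right ?_
      rw [← norm_eq_zero]
      nlinarith [norm_nonneg (x + y)]
    obtain ⟨v, hv1, hv0⟩ := hperp
    have hsdxy : sd x y = π := by
      show Real.arccos _ = π
      rw [← hcm, Real.arccos_neg_one]
    refine ⟨v, hv1, ?_, ?_, ?_⟩
    · show Real.arccos _ = _
      rw [hv0, Real.arccos_zero, hsdxy]
    · show Real.arccos _ = _
      have : (inner ℝ v y : ℝ) = 0 := by
        rw [hxy, inner_neg_right, ← real_inner_comm v x, hv0, neg_zero]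
      rw [this, Real.arccos_zero, hsdxy]
    · rw [hv0, hxy]; simp
  · -- generic case
    set c : ℝ := inner ℝ x y with hc
    have hs2 : ‖x + y‖ ^ 2 = 2 + 2 * c := by
      rw [norm_add_sq_real, hx, hy, ← hc]; ring
    have hspos : 0 < ‖x + y‖ := by
      rcases (norm_nonneg (x + y)).lt_or_eq with h | h
      · exact h
      · exfalso; rw [← h] at hs2; simp at hs2; linarith
    set s : ℝ := ‖x + y‖ with hsdef
    refine ⟨s⁻¹ • (x + y), ?_, ?_, ?_, ?_⟩
    · rw [norm_smul, Real.norm_eq_abs, abs_of_pos (inv_pos.mpr hspos)]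
      field_simp
      exact hsdef.symm
    · -- sd x m = sd x y / 2
      have hin : (inner ℝ x (s⁻¹ • (x + y)) : ℝ) = s / 2 := by
        rw [real_inner_smul_right, inner_add_right, real_inner_self_eq_norm_sq, hx, ← hc]
        field_simp
        nlinarith [hs2]
      show Real.arccos _ = _
      rw [hin]
      have hhalf : Real.cos (Real.arccos c / 2) = s / 2 := by
        rw [Real.cos_half (by linarith [Real.arccos_nonneg c, Real.pi_pos]) (Real.arccos_le_pi c),
          Real.cos_arccos hc1 (inner_le_one' hx hy)]
        rw [show (1 + c) / 2 = (s / 2) ^ 2 by nlinarith [hs2]]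
        exact Real.sqrt_sq (by positivity)
      rw [← hhalf, Real.arccos_cos (by linarith [Real.arccos_nonneg c]) ?hle]
      · rfl
      case hle => linarith [Real.arccos_le_pi c, Real.pi_pos]
    · -- sd m y = sd x y / 2
      have hin : (inner ℝ (s⁻¹ • (x + y)) y : ℝ) = s / 2 := by
        rw [real_inner_smul_left, inner_add_left, real_inner_self_eq_norm_sq, hy, ← hc]
        field_simp
        nlinarith [hs2]
      show Real.arccos _ = _
      rw [hin]
      have hhalf : Real.cos (Real.arccos c / 2) = s / 2 := by
        rw [Real.cos_half (by linarith [Real.arccos_nonneg c, Real.pi_pos]) (Real.arccos_le_pi c),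
          Real.cos_arccos hc1 (inner_le_one' hx hy)]
        rw [show (1 + c) / 2 = (s / 2) ^ 2 by nlinarith [hs2]]
        exact Real.sqrt_sq (by positivity)
      rw [← hhalf, Real.arccos_cos (by linarith [Real.arccos_nonneg c]) ?hle2]
      · rfl
      case hle2 => linarith [Real.arccos_le_pi c, Real.pi_pos]
    · -- reflection property
      have hin : (inner ℝ x (s⁻¹ • (x + y)) : ℝ) = s / 2 := by
        rw [real_inner_smul_right, inner_add_right, real_inner_self_eq_norm_sq, hx, ← hc]
        field_simp
        nlinarith [hs2]
      rw [hin, smul_smul]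
      rw [show (2 * (s / 2)) * s⁻¹ = 1 by field_simp]
      simp


/-- chain bound : spherical distance at most sum of edge lengths -/
lemma sd_chain (c : ℕ → E) (hcu : ∀ l, ‖c l‖ = 1) (a : ℕ) :
    ∀ b, a ≤ b → sd (c a) (c b) ≤ ∑ l ∈ Finset.Ico a b, sd (c l) (c (l + 1)) := by
  intro b
  induction b with
  | zero =>
    intro h
    interval_cases a
    simp [sd_self (hcu 0)]
  | succ b ih =>
    intro h
    rcases Nat.lt_or_ge a (b + 1) with h' | h'
    · have hab : a ≤ b := Nat.lt_succ_iff.mp h'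
      calc sd (c a) (c (b + 1)) ≤ sd (c a) (c b) + sd (c b) (c (b + 1)) :=
            sd_triangle (hcu a) (hcu b) (hcu (b + 1))
        _ ≤ (∑ l ∈ Finset.Ico a b, sd (c l) (c (l + 1))) + sd (c b) (c (b + 1)) := by
            linarith [ih hab]
        _ = ∑ l ∈ Finset.Ico a (b + 1), sd (c l) (c (l + 1)) := by
            rw [Finset.sum_Ico_succ_top hab]
    · have : a = b + 1 := le_antisymm h h'
      subst this
      simp [sd_self (hcu _)]

/-- periodic extension -/
lemma chain_mod {n : ℕ} (hn : 0 < n) (c : ℕ → E) (hper : ∀ l, c (l + n) = c l) :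
    ∀ l, c l = c (l % n) := by
  intro l
  induction l using Nat.strong_induction_on with
  | _ l ih =>
    rcases Nat.lt_or_ge l n with h | h
    · rw [Nat.mod_eq_of_lt h]
    · have h1 : l - n + n = l := Nat.sub_add_cancel h
      have h2 : c (l - n + n) = c (l - n) := hper (l - n)
      rw [h1] at h2
      rw [h2, ih (l - n) (by omega)]
      congr 1
      exact (Nat.mod_eq_sub_mod h).symm


lemma cap_of_small_edges {L ε : ℝ} (hε : 0 < ε) (hLε : L / 2 + 2 * ε < π)
    {n : ℕ} (hn : 0 < n) (c : ℕ → E) (hcu : ∀ l, ‖c l‖ = 1)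
    (hper : ∀ l, c (l + n) = c l)
    (hperp : ∀ x : E, ‖x‖ = 1 → ∃ v : E, ‖v‖ = 1 ∧ (inner ℝ x v : ℝ) = 0)
    (hsum : ∑ l ∈ Finset.range n, sd (c l) (c (l + 1)) ≤ L)
    (hedge : ∀ l, sd (c l) (c (l + 1)) ≤ ε) :
    ∃ e : E, ‖e‖ = 1 ∧ ∀ l, sd (c l) e ≤ L / 4 + ε / 2 := by
  classical
  obtain ⟨sf, hsf⟩ : ∃ sf : ℕ → ℝ,
      ∀ l, sf l = ∑ t ∈ Finset.range l, sd (c t) (c (t + 1)) :=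
    ⟨_, fun _ => rfl⟩
  have hsf0 : sf 0 = 0 := by rw [hsf]; simp
  have hsucc : ∀ l, sf (l + 1) = sf l + sd (c l) (c (l + 1)) := by
    intro l; rw [hsf, hsf, Finset.sum_range_succ]
  have hP0 : 0 ≤ sf n := by
    rw [hsf]; exact Finset.sum_nonneg fun l _ => sd_nonneg _ _
  have hPL : sf n ≤ L := by rw [hsf]; exact hsum
  have hQ : ∃ b, sf n / 2 ≤ sf b := ⟨n, by linarith⟩
  obtain ⟨b, hsb, hbmin⟩ : ∃ b, sf n / 2 ≤ sf b ∧ ∀ b' < b, ¬ sf n / 2 ≤ sf b' :=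
    ⟨Nat.find hQ, Nat.find_spec hQ, fun b' h => Nat.find_min hQ h⟩
  have hbn : b ≤ n := by
    by_contra hcon
    exact hbmin n (by omega) (by linarith)
  have hub : sf b ≤ sf n / 2 + ε := by
    rcases Nat.eq_zero_or_pos b with hb0 | hbpos
    · rw [hb0, hsf0]; linarith
    · have h1 : ¬ sf n / 2 ≤ sf (b - 1) := hbmin (b - 1) (by omega)
      push_neg at h1
      have hb1 : b - 1 + 1 = b := Nat.succ_pred_eq_of_pos hbpos
      have h2 := hsucc (b - 1)
      have h3 := hedge (b - 1)
      rw [hb1] at h2 h3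
      rw [h2]
      linarith
  have hC : L / 2 + ε < π := by linarith
  have hsum_ico : ∀ a l : ℕ, a ≤ l → sd (c a) (c l) ≤ sf l - sf a := by
    intro a l hal
    have h := sd_chain c hcu a l hal
    rw [Finset.sum_Ico_eq_sub _ hal] at h
    rw [hsf, hsf]; exact h
  have hAB : ∀ l, l ≤ n → sd (c l) (c 0) + sd (c l) (c b) ≤ L / 2 + ε := by
    intro l hln
    rcases le_or_gt l b with hlb | hbl
    · have h1 : sd (c l) (c 0) ≤ sf l - sf 0 := by
        rw [sd_comm]; exact hsum_ico 0 l (Nat.zero_le l)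
      have h2 : sd (c l) (c b) ≤ sf b - sf l := hsum_ico l b hlb
      rw [hsf0] at h1
      linarith
    · have h2 : sd (c l) (c b) ≤ sf l - sf b := by
        rw [sd_comm]; exact hsum_ico b l hbl.le
      have hcn : c n = c 0 := by have := hper 0; simpa using this
      have h1 : sd (c l) (c 0) ≤ sf n - sf l := by
        rw [← hcn]; exact hsum_ico l n hln
      linarith
  obtain ⟨e, he1, hxe, -, hrefl⟩ :=
    exists_midpoint (hcu 0) (hcu b) (hperp _ (hcu 0))
  have hθ0 : sd (c 0) e ≤ (L / 2 + ε) / 2 := by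
    have h00 := hAB 0 (Nat.zero_le n)
    rw [sd_self (hcu 0), zero_add] at h00
    rw [hxe]; linarith
  have hdich : ∀ l, l ≤ n →
      sd (c l) e ≤ (L / 2 + ε) / 2 ∨ π - (L / 2 + ε) / 2 ≤ sd (c l) e := by
    intro l hln
    have hxu : ‖c l‖ = 1 := hcu l
    have hRu : ‖(2 * (inner ℝ (c l) e : ℝ)) • e - c l‖ = 1 := refl_norm he1 hxu
    have h2 : sd (c b) ((2 * (inner ℝ (c l) e : ℝ)) • e - c l) = sd (c 0) (c l) := by
      show Real.arccos _ = Real.arccos _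
      congr 1
      rw [← hrefl]
      exact refl_inner he1 (c 0) (c l)
    have h1 : sd (c l) ((2 * (inner ℝ (c l) e : ℝ)) • e - c l)
        ≤ sd (c l) (c b) + sd (c b) ((2 * (inner ℝ (c l) e : ℝ)) • e - c l) :=
      sd_triangle hxu (hcu b) hRu
    have h3 : sd (c l) ((2 * (inner ℝ (c l) e : ℝ)) • e - c l) ≤ L / 2 + ε := by
      rw [h2, sd_comm (c 0) (c l)] at h1
      linarith [hAB l hln]
    exact sd_dichotomy he1 hxu hC h3
  have key : ∀ l, l ≤ n → sd (c l) e ≤ (L / 2 + ε) / 2 := by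
    intro l
    induction l with
    | zero => intro _; exact hθ0
    | succ l ih =>
      intro h
      have hl := ih (by omega)
      rcases hdich (l + 1) h with h' | h'
      · exact h'
      · exfalso
        have htri : sd (c (l + 1)) e ≤ sd (c (l + 1)) (c l) + sd (c l) e :=
          sd_triangle (hcu (l + 1)) (hcu l) he1
        rw [sd_comm (c (l + 1)) (c l)] at htri
        linarith [hedge l]
  refine ⟨e, he1, fun l => ?_⟩
  rw [chain_mod hn c hper l]
  linarith [key (l % n) (le_of_lt (Nat.mod_lt l hn))]


lemma bisect {n : ℕ} (c : ℕ → E) (hcu : ∀ l, ‖c l‖ = 1)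
    (hper : ∀ l, c (l + n) = c l)
    (hperp : ∀ x : E, ‖x‖ = 1 → ∃ v : E, ‖v‖ = 1 ∧ (inner ℝ x v : ℝ) = 0) :
    ∃ c' : ℕ → E, (∀ l, ‖c' l‖ = 1) ∧ (∀ l, c' (l + 2 * n) = c' l) ∧
      (∀ l, c' (2 * l) = c l) ∧
      (∀ l, sd (c' l) (c' (l + 1)) = sd (c (l / 2)) (c (l / 2 + 1)) / 2) := by
  classical
  obtain ⟨f, hf⟩ : ∃ f : E → E → E, ∀ x y, ‖x‖ = 1 → ‖y‖ = 1 →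
      ‖f x y‖ = 1 ∧ sd x (f x y) = sd x y / 2 ∧ sd (f x y) y = sd x y / 2 := by
    refine ⟨fun x y => if h : ‖x‖ = 1 ∧ ‖y‖ = 1 then
      Classical.choose (exists_midpoint h.1 h.2 (hperp x h.1)) else x, ?_⟩
    intro x y hx hy
    dsimp only
    rw [dif_pos ⟨hx, hy⟩]
    obtain ⟨h1, h2, h3, -⟩ :=
      Classical.choose_spec (exists_midpoint (x := x) (y := y) hx hy (hperp x hx))
    exact ⟨h1, h2, h3⟩
  refine ⟨fun l => if l % 2 = 0 then c (l / 2) else f (c (l / 2)) (c (l / 2 + 1)),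
    ?_, ?_, ?_, ?_⟩
  · intro l
    dsimp only
    split
    · exact hcu _
    · exact (hf _ _ (hcu _) (hcu _)).1
  · intro l
    have hmod : (l + 2 * n) % 2 = l % 2 := by omega
    have hdiv : (l + 2 * n) / 2 = l / 2 + n := by omega
    dsimp only
    rw [hmod, hdiv]
    by_cases h : l % 2 = 0
    · rw [if_pos h, if_pos h, hper]
    · rw [if_neg h, if_neg h, hper, show l / 2 + n + 1 = l / 2 + 1 + n by omega, hper]
  · intro l
    have h1 : (2 * l) % 2 = 0 := by omega
    have h2 : (2 * l) / 2 = l := by omega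
    dsimp only
    rw [if_pos h1, h2]
  · intro l
    rcases Nat.even_or_odd l with ⟨j, hj⟩ | ⟨j, hj⟩
    · subst hj
      have e1 : (j + j) % 2 = 0 := by omega
      have e2 : (j + j) / 2 = j := by omega
      have e3 : (j + j + 1) % 2 ≠ 0 := by omega
      have e4 : (j + j + 1) / 2 = j := by omega
      dsimp only
      rw [if_pos e1, if_neg e3, e2, e4]
      exact (hf _ _ (hcu _) (hcu _)).2.1
    · subst hj
      have e1 : (2 * j + 1) % 2 ≠ 0 := by omega
      have e2 : (2 * j + 1) / 2 = j := by omega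
      have e3 : (2 * j + 1 + 1) % 2 = 0 := by omega
      have e4 : (2 * j + 1 + 1) / 2 = j + 1 := by omega
      dsimp only
      rw [if_neg e1, if_pos e3, e2, e4]
      exact (hf _ _ (hcu _) (hcu _)).2.2

lemma sum_range_two_mul (g : ℕ → ℝ) :
    ∀ m : ℕ, ∑ l ∈ Finset.range (2 * m), g l
      = ∑ j ∈ Finset.range m, (g (2 * j) + g (2 * j + 1)) := by
  intro m
  induction m with
  | zero => simp
  | succ m ih =>
    rw [show 2 * (m + 1) = 2 * m + 1 + 1 by omega, Finset.sum_range_succ,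
      Finset.sum_range_succ, ih, Finset.sum_range_succ]
    ring

lemma cap_polygon {L ε : ℝ} (hε : 0 < ε) (hLε : L / 2 + 2 * ε < π) :
    ∀ N : ℕ, ∀ n : ℕ, 0 < n → ∀ c : ℕ → E, (∀ l, ‖c l‖ = 1) →
    (∀ l, c (l + n) = c l) →
    (∀ x : E, ‖x‖ = 1 → ∃ v : E, ‖v‖ = 1 ∧ (inner ℝ x v : ℝ) = 0) →
    (∑ l ∈ Finset.range n, sd (c l) (c (l + 1)) ≤ L) →
    (∀ l, sd (c l) (c (l + 1)) ≤ 2 ^ N * ε) →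
    ∃ e : E, ‖e‖ = 1 ∧ ∀ l, sd (c l) e ≤ L / 4 + ε / 2 := by
  intro N
  induction N with
  | zero =>
    intro n hn c hcu hper hperp hsum hedge
    exact cap_of_small_edges hε hLε hn c hcu hper hperp hsum (by simpa using hedge)
  | succ N ih =>
    intro n hn c hcu hper hperp hsum hedge
    obtain ⟨c', hcu', hper', heven, hedge'⟩ := bisect c hcu hper hperp
    have hsum' : ∑ l ∈ Finset.range (2 * n), sd (c' l) (c' (l + 1)) ≤ L := by
      rw [sum_range_two_mul]
      calc ∑ j ∈ Finset.range n,
            (sd (c' (2 * j)) (c' (2 * j + 1)) + sd (c' (2 * j + 1)) (c' (2 * j + 1 + 1)))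
          = ∑ j ∈ Finset.range n, sd (c j) (c (j + 1)) := by
            apply Finset.sum_congr rfl
            intro j _
            rw [hedge' (2 * j), hedge' (2 * j + 1),
              show (2 * j) / 2 = j by omega, show (2 * j + 1) / 2 = j by omega]
            ring
        _ ≤ L := hsum
    have hedge'' : ∀ l, sd (c' l) (c' (l + 1)) ≤ 2 ^ N * ε := by
      intro l
      rw [hedge' l]
      have := hedge (l / 2)
      have h2 : (0:ℝ) < 2 ^ N := by positivity
      rw [pow_succ] at this
      linarith
    obtain ⟨e, he1, hcap⟩ := ih (2 * n) (by omega) c' hcu' hper' hperp hsum' hedge''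
    refine ⟨e, he1, fun l => ?_⟩
    have := hcap (2 * l)
    rwa [heven l] at this

/-- final form of the cap lemma -/
lemma cap_final {L ε : ℝ} (hε : 0 < ε) (hLε : L / 2 + 2 * ε < π)
    {n : ℕ} (hn : 0 < n) (c : ℕ → E) (hcu : ∀ l, ‖c l‖ = 1)
    (hper : ∀ l, c (l + n) = c l)
    (hperp : ∀ x : E, ‖x‖ = 1 → ∃ v : E, ‖v‖ = 1 ∧ (inner ℝ x v : ℝ) = 0)
    (hsum : ∑ l ∈ Finset.range n, sd (c l) (c (l + 1)) ≤ L) :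
    ∃ e : E, ‖e‖ = 1 ∧ ∀ l, sd (c l) e ≤ L / 4 + ε / 2 := by
  obtain ⟨N, hN⟩ := pow_unbounded_of_one_lt (π / ε) (one_lt_two (α := ℝ))
  refine cap_polygon hε hLε N n hn c hcu hper hperp hsum fun l => ?_
  have h1 : π / ε < 2 ^ N := hN
  have h2 : π < 2 ^ N * ε := by
    rw [div_lt_iff₀ hε] at h1; linarith
  linarith [sd_le_pi (c l) (c (l + 1))]

end SD

noncomputable section
lemma exists_unit_perp (x : EuclideanSpace ℝ (Fin 3)) :
    ∃ v : EuclideanSpace ℝ (Fin 3), ‖v‖ = 1 ∧ (inner ℝ x v : ℝ) = 0 := by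
  by_cases hx : x = 0
  · refine ⟨EuclideanSpace.single 0 1, ?_, ?_⟩
    · simp [EuclideanSpace.norm_single]
    · simp [hx]
  · have hne : ((ℝ ∙ x)ᗮ : Submodule ℝ (EuclideanSpace ℝ (Fin 3))) ≠ ⊥ := by
      intro hbot
      have htop : (ℝ ∙ x) = ⊤ := by
        rwa [Submodule.orthogonal_eq_bot_iff] at hbot
      have h1 : Module.finrank ℝ (ℝ ∙ x) = 1 := finrank_span_singleton hx
      have h3 : Module.finrank ℝ (EuclideanSpace ℝ (Fin 3)) = 3 := by
        simp [finrank_euclideanSpace]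
      rw [htop] at h1
      rw [finrank_top] at h1
      omega
    obtain ⟨v₀, hv₀mem, hv₀ne⟩ := Submodule.exists_mem_ne_zero_of_ne_bot hne
    refine ⟨(‖v₀‖⁻¹ : ℝ) • v₀, norm_smul_inv_norm hv₀ne, ?_⟩
    rw [real_inner_smul_right]
    have : (inner ℝ x v₀ : ℝ) = 0 := by
      have := (Submodule.mem_orthogonal _ v₀).mp hv₀mem x
        (Submodule.mem_span_singleton_self x)
      exact this
    rw [this, mul_zero]
end


open Real

open Fin.NatCast

/-- Lemma 4.8: for a convex polytope in ℝ³ with vertices pᵢ and angle defects δᵢ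
(0 < δᵢ < 2π, Σδᵢ = 4π), where for each i the unit vectors from pᵢ to the other
vertices lie in a convex spherical polygon of perimeter 2π − δᵢ (the spherical
section of the polytope at pᵢ), one has ‖Σ_{j≠i} δⱼ (pⱼ−pᵢ)/‖pⱼ−pᵢ‖‖ > δᵢ. -/
theorem defect_sum_inequality
    (m : ℕ) (p : Fin m → EuclideanSpace ℝ (Fin 3)) (hinj : Function.Injective p)
    (δ : Fin m → ℝ) (hδ : ∀ i, 0 < δ i ∧ δ i < 2 * π) (hsum : ∑ i, δ i = 4 * π)
    (hsec : ∀ i : Fin m, ∃ (k : ℕ) (u : Fin (k + 1) → EuclideanSpace ℝ (Fin 3)),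
      (∀ l, ‖u l‖ = 1) ∧
      (∑ l, arccos (inner ℝ (u l) (u (l + 1)) : ℝ)) = 2 * π - δ i ∧
      ∀ j, j ≠ i → ∃ w : Fin (k + 1) → ℝ, (∀ l, 0 ≤ w l) ∧
        ∃ lam : ℝ, 0 < lam ∧
          ∑ l, w l • u l = lam • ((‖p j - p i‖)⁻¹ • (p j - p i)))
    (i : Fin m) :
    δ i < ‖∑ j ∈ Finset.univ.erase i, δ j • ((‖p j - p i‖)⁻¹ • (p j - p i))‖ := by
  classical
  obtain ⟨hδ0, hδ2⟩ := hδ i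
  have hπ := Real.pi_pos
  have h4 : 0 < 4 * π - δ i := by linarith
  obtain ⟨μ, hμpos, hμdef⟩ :
      ∃ μ : ℝ, 0 < μ ∧ μ = δ i / (2 * π) - δ i / (4 * π - δ i) := by
    refine ⟨_, ?_, rfl⟩
    have h1 : δ i / (4 * π - δ i) < δ i / (2 * π) :=
      div_lt_div_of_pos_left hδ0 (by linarith) (by linarith)
    linarith
  obtain ⟨ε, hε0, hε8, hεμ⟩ : ∃ ε : ℝ, 0 < ε ∧ ε ≤ δ i / 8 ∧ ε ≤ μ :=
    ⟨min (δ i / 8) μ, lt_min (by linarith) hμpos, min_le_left _ _, min_le_right _ _⟩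
  obtain ⟨k, u, hu1, hL, hcone⟩ := hsec i
  -- the spherical section as a periodic chain of unit vectors
  have hcu : ∀ l : ℕ, ‖u (l : Fin (k + 1))‖ = 1 := fun l => hu1 _
  have hper : ∀ l : ℕ, u (((l + (k + 1) : ℕ)) : Fin (k + 1)) = u (l : Fin (k + 1)) := by
    intro l
    congr 1
    rw [Nat.cast_add, Fin.natCast_self, add_zero]
  have hchain : ∑ l ∈ Finset.range (k + 1),
      sd (u (l : Fin (k + 1))) (u ((l + 1 : ℕ) : Fin (k + 1))) = 2 * π - δ i := by
    have h1 : ∑ l ∈ Finset.range (k + 1),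
        sd (u (l : Fin (k + 1))) (u ((l + 1 : ℕ) : Fin (k + 1)))
        = ∑ l : Fin (k + 1), sd (u l) (u (l + 1)) := by
      rw [← Fin.sum_univ_eq_sum_range
        (fun l : ℕ => sd (u (l : Fin (k + 1))) (u ((l + 1 : ℕ) : Fin (k + 1)))) (k + 1)]
      apply Finset.sum_congr rfl
      intro l _
      congr 1
      · exact congrArg u (Fin.cast_val_eq_self l)
      · congr 1; push_cast [Fin.cast_val_eq_self]; ring
    rw [h1]
    exact hL
  -- apply the cap lemma
  have hLε : (2 * π - δ i) / 2 + 2 * ε < π := by linarith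
  obtain ⟨e, he1, hcap⟩ :=
    cap_final hε0 hLε (Nat.succ_pos k) (fun l : ℕ => u (l : Fin (k + 1))) hcu hper
      (fun x _ => exists_unit_perp x) (le_of_eq hchain)
  -- all the section vertices have inner product at least s with e
  obtain ⟨s, hsdef⟩ : ∃ s : ℝ, s = Real.sin (δ i / 4 - ε / 2) := ⟨_, rfl⟩
  have hargpos : 0 < δ i / 4 - ε / 2 := by linarith
  have hs_lb : 2 / π * (δ i / 4 - ε / 2) ≤ s := by
    rw [hsdef]; exact Real.mul_le_sin hargpos.le (by linarith)
  have hs_pos : 0 < s := by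
    rw [hsdef]; exact Real.sin_pos_of_pos_of_lt_pi hargpos (by linarith)
  have hue : ∀ l : Fin (k + 1), s ≤ (inner ℝ (u l) e : ℝ) := by
    intro l
    have h1 := hcap (l : ℕ)
    simp only [Fin.cast_val_eq_self] at h1
    have h2 : Real.cos ((2 * π - δ i) / 4 + ε / 2) ≤ Real.cos (sd (u l) e) :=
      Real.cos_le_cos_of_nonneg_of_le_pi (sd_nonneg _ _) (by linarith) h1
    rw [cos_sd (hu1 l) he1] at h2
    rw [show (2 * π - δ i) / 4 + ε / 2 = π / 2 - (δ i / 4 - ε / 2) by ring,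
      Real.cos_pi_div_two_sub] at h2
    rw [hsdef]
    exact h2
  -- unit vectors towards the other vertices
  have hvnorm : ∀ j, j ≠ i → ‖(‖p j - p i‖)⁻¹ • (p j - p i)‖ = 1 := by
    intro j hj
    have hne : p j - p i ≠ 0 := sub_ne_zero.mpr fun h => hj (hinj h)
    exact norm_smul_inv_norm (𝕜 := ℝ) hne
  have hve : ∀ j, j ≠ i → s ≤ (inner ℝ ((‖p j - p i‖)⁻¹ • (p j - p i)) e : ℝ) := by
    intro j hj
    obtain ⟨w, hw0, lam, hlam, heq⟩ := hcone j hj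
    have hwsum : lam ≤ ∑ l, w l := by
      have h1 : ‖∑ l, w l • u l‖ ≤ ∑ l, w l := by
        calc ‖∑ l, w l • u l‖ ≤ ∑ l, ‖w l • u l‖ := norm_sum_le _ _
          _ = ∑ l, w l := by
              apply Finset.sum_congr rfl
              intro l _
              rw [norm_smul, Real.norm_eq_abs, abs_of_nonneg (hw0 l), hu1 l, mul_one]
      rwa [heq, norm_smul, Real.norm_eq_abs, abs_of_pos hlam, hvnorm j hj, mul_one] at h1
    have h3 : s * lam ≤ (inner ℝ (∑ l, w l • u l) e : ℝ) := by
      have h2 : (inner ℝ (∑ l, w l • u l) e : ℝ) = ∑ l, w l * (inner ℝ (u l) e : ℝ) := by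
        rw [sum_inner]
        apply Finset.sum_congr rfl
        intro l _
        rw [real_inner_smul_left]
      rw [h2]
      calc s * lam ≤ s * ∑ l, w l := mul_le_mul_of_nonneg_left hwsum hs_pos.le
        _ = ∑ l, s * w l := by rw [Finset.mul_sum]
        _ ≤ ∑ l, w l * (inner ℝ (u l) e : ℝ) := by
            apply Finset.sum_le_sum
            intro l _
            rw [mul_comm]
            exact mul_le_mul_of_nonneg_left (hue l) (hw0 l)
    rw [heq, real_inner_smul_left] at h3
    exact (mul_le_mul_iff_right₀ hlam).mp (by linarith)
  -- sum of the defects away from i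
  have herase : ∑ j ∈ Finset.univ.erase i, δ j = 4 * π - δ i := by
    have h := Finset.sum_erase_add Finset.univ δ (Finset.mem_univ i)
    rw [hsum] at h
    linarith
  -- lower bound on the inner product with e of the whole sum
  have hSe : (4 * π - δ i) * s ≤
      (inner ℝ (∑ j ∈ Finset.univ.erase i, δ j • ((‖p j - p i‖)⁻¹ • (p j - p i))) e : ℝ) := by
    rw [sum_inner]
    calc (4 * π - δ i) * s = ∑ j ∈ Finset.univ.erase i, δ j * s := by
          rw [← Finset.sum_mul, herase]
      _ ≤ ∑ j ∈ Finset.univ.erase i,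
            (inner ℝ (δ j • ((‖p j - p i‖)⁻¹ • (p j - p i))) e : ℝ) := by
          apply Finset.sum_le_sum
          intro j hj
          rw [real_inner_smul_left]
          exact mul_le_mul_of_nonneg_left (hve j (Finset.ne_of_mem_erase hj)) (hδ j).1.le
  have hfinal1 : (inner ℝ (∑ j ∈ Finset.univ.erase i,
      δ j • ((‖p j - p i‖)⁻¹ • (p j - p i))) e : ℝ)
      ≤ ‖∑ j ∈ Finset.univ.erase i, δ j • ((‖p j - p i‖)⁻¹ • (p j - p i))‖ := by
    have h := real_inner_le_norm
      (∑ j ∈ Finset.univ.erase i, δ j • ((‖p j - p i‖)⁻¹ • (p j - p i))) e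
    rwa [he1, mul_one] at h
  -- Jordan's inequality gives the strict bound
  have hjordan : δ i < (4 * π - δ i) * s := by
    have h1 : 2 / π * (δ i / 4 - ε / 2) = δ i / (2 * π) - ε / π := by
      field_simp
      ring
    have h2 : ε / π ≤ μ / π := by
      apply div_le_div_of_nonneg_right hεμ hπ.le
    have h3 : μ / π < μ := div_lt_self hμpos (by linarith [Real.pi_gt_three])
    have h4s : δ i / (4 * π - δ i) < s := by
      have h5 : δ i / (2 * π) - μ = δ i / (4 * π - δ i) := by rw [hμdef]; ring
      linarith
    calc δ i = (4 * π - δ i) * (δ i / (4 * π - δ i)) := by field_simp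
      _ < (4 * π - δ i) * s := mul_lt_mul_of_pos_left h4s h4
  linarith
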